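/- Let N be an abelian Lie group acting conformally on a Lorentzian manifold (M,g). If every N-orbit has dimension at least 2, then N is inessential, i.e. there is a metric g' conformal to g which is N-invariant. -/

import Mathlib

noncomputable section

open Manifold Set

variable {E : Type*} [NormedAddCommGroup E] [NormedSpace ℝ E] [FiniteDimensional ℝ E]
variable {M : Type*} [TopologicalSpace M] [ChartedSpace E M]
  [IsManifold 𝓘(ℝ, E) (⊤ : ℕ∞) M]

/-- A symmetric bilinear form of Lorentzian signature `(1, dim E - 1)`: there is a timelike
vector whose orthogonal complement is positive definite (timelike-negative convention). -/
def IsLorentzForm (b : E →L[ℝ] E →L[ℝ] ℝ) : Prop :=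
  (∀ v w, b v w = b w v) ∧ ∃ v, b v v < 0 ∧ ∀ w, b v w = 0 → w ≠ 0 → 0 < b w w

/-- A pseudo-Riemannian metric: a smooth field of symmetric nondegenerate bilinear forms on
the tangent spaces. -/
def IsPseudoMetric (g : M → E →L[ℝ] E →L[ℝ] ℝ) : Prop :=
  ContMDiff 𝓘(ℝ, E) 𝓘(ℝ, E →L[ℝ] E →L[ℝ] ℝ) (⊤ : ℕ∞) g ∧
    ∀ x : M, (∀ v w, g x v w = g x w v) ∧ ∀ v, (∀ w, g x v w = 0) → v = 0

/-- A Lorentzian metric: a smooth field of Lorentzian bilinear forms on the tangent spaces. -/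
def IsLorentzMetric (g : M → E →L[ℝ] E →L[ℝ] ℝ) : Prop :=
  ContMDiff 𝓘(ℝ, E) 𝓘(ℝ, E →L[ℝ] E →L[ℝ] ℝ) (⊤ : ℕ∞) g ∧ ∀ x : M, IsLorentzForm (g x)

/-- A map `f : M → M` is conformal with respect to `g`: it is smooth and pulls back `g` to a
positive multiple of `g`. -/
def ConformalTo (g : M → E →L[ℝ] E →L[ℝ] ℝ) (f : M → M) : Prop :=
  ContMDiff 𝓘(ℝ, E) 𝓘(ℝ, E) (⊤ : ℕ∞) f ∧ ∃ c : M → ℝ, (∀ x, 0 < c x) ∧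
    ∀ (x : M) (v w : TangentSpace 𝓘(ℝ, E) x),
      g (f x) (mfderiv 𝓘(ℝ, E) 𝓘(ℝ, E) f x v) (mfderiv 𝓘(ℝ, E) 𝓘(ℝ, E) f x w)
        = c x * g x v w

/-- A map `f : M → M` is an isometry with respect to `g`: it is smooth and pulls back `g`
to `g`. -/
def IsometryTo (g : M → E →L[ℝ] E →L[ℝ] ℝ) (f : M → M) : Prop :=
  ContMDiff 𝓘(ℝ, E) 𝓘(ℝ, E) (⊤ : ℕ∞) f ∧
    ∀ (x : M) (v w : TangentSpace 𝓘(ℝ, E) x),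
      g (f x) (mfderiv 𝓘(ℝ, E) 𝓘(ℝ, E) f x v) (mfderiv 𝓘(ℝ, E) 𝓘(ℝ, E) f x w)
        = g x v w

/-- `φ : ℝ → M → M` is a one-parameter group of transformations. -/
def IsFlow (φ : ℝ → M → M) : Prop :=
  (∀ x : M, φ 0 x = x) ∧ ∀ (s t : ℝ) (x : M), φ (s + t) x = φ s (φ t x)

/-- The flow `φ` is generated by the vector field `X`: for every `x` the curve `t ↦ φ t x`
has velocity `X (φ t x)`. -/
def FlowGenerates (φ : ℝ → M → M) (X : (x : M) → TangentSpace 𝓘(ℝ, E) x) : Prop :=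
  ∀ (x : M) (t : ℝ), HasMFDerivAt 𝓘(ℝ, ℝ) 𝓘(ℝ, E) (fun s => φ s x) t
    ((ContinuousLinearMap.id ℝ ℝ).smulRight (X (φ t x)))

/-- A conformal vector field: a (complete) vector field whose flow consists of conformal
transformations of `(M, g)`. -/
def IsConformalField (g : M → E →L[ℝ] E →L[ℝ] ℝ)
    (X : (x : M) → TangentSpace 𝓘(ℝ, E) x) : Prop :=
  ∃ φ : ℝ → M → M, IsFlow φ ∧ FlowGenerates φ X ∧ ∀ t : ℝ, ConformalTo g (φ t)

/-- A Killing vector field: a (complete) vector field whose flow consists of isometries of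
`(M, g)`. -/
def IsKillingField (g : M → E →L[ℝ] E →L[ℝ] ℝ)
    (X : (x : M) → TangentSpace 𝓘(ℝ, E) x) : Prop :=
  ∃ φ : ℝ → M → M, IsFlow φ ∧ FlowGenerates φ X ∧ ∀ t : ℝ, IsometryTo g (φ t)

/-- Let `N` be an abelian Lie group (with Lie algebra `𝔫`) acting
conformally on a Lorentzian manifold `(M, g)`: each `A ∈ 𝔫` induces a complete conformal
vector field `v A` with flow `φ A`, depending linearly on `A`, and commutativity of `N` is
expressed by the flows preserving the fields: `(φ A t)_* (v B) = v B`.  If every `N`-orbit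
has dimension at least 2, then `N` is inessential: there is a positive function `ρ` such that
the conformal metric `ρ • g` is invariant under all the flows `φ A`. -/
theorem abelian_orbits_dim_ge_two_inessential
    (g : M → E →L[ℝ] E →L[ℝ] ℝ) (hg : IsLorentzMetric g)
    (𝔫 : Type*) [AddCommGroup 𝔫] [Module ℝ 𝔫] [FiniteDimensional ℝ 𝔫]
    (v : 𝔫 → (x : M) → TangentSpace 𝓘(ℝ, E) x)
    (hlin : ∀ (a : ℝ) (A B : 𝔫) (x : M), v (a • A + B) x = a • v A x + v B x)
    (hcont : ∀ A B : 𝔫, Continuous fun x : M => g x (v A x) (v B x))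
    (φ : 𝔫 → ℝ → M → M)
    (hflow : ∀ A : 𝔫, IsFlow (φ A) ∧ FlowGenerates (φ A) (v A))
    (hconf : ∀ (A : 𝔫) (t : ℝ), ConformalTo g (φ A t))
    (hcomm : ∀ (A B : 𝔫) (t : ℝ) (x : M),
      mfderiv 𝓘(ℝ, E) 𝓘(ℝ, E) (φ A t) x (v B x) = v B (φ A t x))
    (horb : ∀ x : M, 2 ≤ Module.finrank ℝ
      (Submodule.span ℝ (Set.range fun A : 𝔫 => (v A x : E)))) :
    ∃ ρ : M → ℝ, Continuous ρ ∧ (∀ x, 0 < ρ x) ∧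
      ∀ (A : 𝔫) (t : ℝ), IsometryTo (fun x => ρ x • g x) (φ A t) := by
  classical
  obtain ⟨hgsmooth, hgx⟩ := hg
  -- basic linearity facts for `v`
  have hv0 : ∀ x : M, v 0 x = 0 := by
    intro x
    have h := hlin 1 0 0 x
    rw [one_smul, add_zero, one_smul] at h
    exact left_eq_add.mp h
  have hvadd : ∀ (A B : 𝔫) (x : M), v (A + B) x = v A x + v B x := by
    intro A B x
    have h := hlin 1 A B x
    rwa [one_smul, one_smul] at h
  have hvsmul : ∀ (a : ℝ) (A : 𝔫) (x : M), v (a • A) x = a • v A x := by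
    intro a A x
    have h := hlin a A 0 x
    rwa [add_zero, hv0, add_zero] at h
  -- a basis of 𝔫
  set n := Module.finrank ℝ 𝔫 with hn
  set b : Module.Basis (Fin n) ℝ 𝔫 := Module.finBasis ℝ 𝔫 with hb
  -- the auxiliary function
  set S : M → ℝ := fun x => ∑ i : Fin n, ∑ j : Fin n,
    (g x (v (b i) x) (v (b j) x)) ^ 2 with hS
  have hScont : Continuous S := by
    apply continuous_finset_sum
    intro i _
    apply continuous_finset_sum
    intro j _
    exact (hcont (b i) (b j)).pow 2
  -- positivity of S
  have hSpos : ∀ x : M, 0 < S x := by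
    intro x
    rcases lt_or_ge 0 (S x) with h | h
    · exact h
    exfalso
    have hSnonneg : 0 ≤ S x :=
      Finset.sum_nonneg fun i _ => Finset.sum_nonneg fun j _ => sq_nonneg _
    have hS0 : S x = 0 := le_antisymm h hSnonneg
    have hzero : ∀ i j : Fin n, g x (v (b i) x) (v (b j) x) = 0 := by
      intro i j
      have h1 := (Finset.sum_eq_zero_iff_of_nonneg
        (fun i _ => Finset.sum_nonneg fun j _ => sq_nonneg _)).mp hS0 i (Finset.mem_univ i)
      have h2 := (Finset.sum_eq_zero_iff_of_nonneg
        (fun j _ => sq_nonneg _)).mp h1 j (Finset.mem_univ j)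
      exact (pow_eq_zero_iff two_ne_zero).mp h2
    -- the bilinear form on 𝔫
    set β : 𝔫 →ₗ[ℝ] 𝔫 →ₗ[ℝ] ℝ :=
      { toFun := fun A =>
          { toFun := fun B => g x (v A x) (v B x)
            map_add' := fun B C => by
              show g x (v A x) (v (B + C) x) = g x (v A x) (v B x) + g x (v A x) (v C x)
              rw [hvadd]; exact map_add _ _ _
            map_smul' := fun a B => by
              show g x (v A x) (v (a • B) x) = a • g x (v A x) (v B x)
              rw [hvsmul]; exact map_smul _ _ _ }
        map_add' := fun A A' => by
          ext B
          simp only [LinearMap.coe_mk, AddHom.coe_mk, LinearMap.add_apply]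
          rw [hvadd]
          exact congrFun (congrArg _ (map_add (g x) _ _)) _
        map_smul' := fun a A => by
          ext B
          simp only [LinearMap.coe_mk, AddHom.coe_mk, LinearMap.smul_apply,
            RingHom.id_apply]
          rw [hvsmul]
          exact congrFun (congrArg _ (map_smul (g x) _ _)) _ } with hβ
    have hβ0 : β = 0 := by
      apply b.ext
      intro i
      apply b.ext
      intro j
      simpa [hβ] using hzero i j
    have hallAB : ∀ A B : 𝔫, g x (v A x) (v B x) = 0 := by
      intro A B
      have : β A B = 0 := by rw [hβ0]; rfl
      simpa [hβ] using this
    -- isotropy of the span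
    have hiso : ∀ u ∈ Submodule.span ℝ (Set.range fun A : 𝔫 => (v A x : E)),
        ∀ w ∈ Submodule.span ℝ (Set.range fun A : 𝔫 => (v A x : E)), g x u w = 0 := by
      intro u hu w hw
      induction hu, hw using Submodule.span_induction₂ with
      | mem_mem u w hu hw =>
        obtain ⟨A, rfl⟩ := hu
        obtain ⟨B, rfl⟩ := hw
        exact hallAB A B
      | zero_left w hw => exact (congrArg (fun f => f w) (g x).map_zero).trans (ContinuousLinearMap.zero_apply w)
      | zero_right u hu => exact (g x u).map_zero
      | add_left u u' w hu hu' hw h1 h2 =>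
        exact (congrArg (fun f => f w) ((g x).map_add u u')).trans
          ((ContinuousLinearMap.add_apply (g x u) (g x u') w).trans ((congrArg₂ (· + ·) h1 h2).trans (add_zero 0)))
      | add_right u w w' hu hw hw' h1 h2 =>
        have e := (g x u).map_add w w'
        rw [h1, h2, add_zero] at e
        exact e
      | smul_left a u w hu hw h1 =>
        exact (congrArg (fun f => f w) ((g x).map_smul a u)).trans
          ((congrArg (a • ·) h1).trans (smul_zero a))
      | smul_right a u w hu hw h1 =>
        have e := (g x u).map_smul a w
        rw [h1, smul_zero] at e
        exact e
    -- Lorentzian forms have no ≥ 2-dimensional totally isotropic subspaces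
    obtain ⟨hsymm, v₀, hv₀, hposd⟩ := hgx x
    set W : Submodule ℝ E := Submodule.span ℝ (Set.range fun A : 𝔫 => (v A x : E)) with hW
    set f : W →ₗ[ℝ] ℝ := ((g x v₀).toLinearMap).comp W.subtype with hf
    have hfinj : Function.Injective f := by
      rw [← LinearMap.ker_eq_bot]
      apply LinearMap.ker_eq_bot'.mpr
      rintro ⟨w, hw⟩ hfw
      have hgw : g x v₀ w = 0 := hfw
      by_contra hne
      have hwne : w ≠ 0 := fun h0 => hne (Subtype.ext h0)
      have := hposd w hgw hwne
      rw [hiso w hw w hw] at this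
      exact lt_irrefl 0 this
    have hle : Module.finrank ℝ W ≤ 1 := by
      have := LinearMap.finrank_le_finrank_of_injective hfinj
      simpa using this
    have h2 := horb x
    replace h2 : 2 ≤ Module.finrank ℝ W := h2
    exact absurd (h2.trans hle) (by norm_num)
  -- the conformal factor
  refine ⟨fun x => (Real.sqrt (S x))⁻¹, ?_, ?_, ?_⟩
  · exact (Real.continuous_sqrt.comp hScont).inv₀
      fun x => ne_of_gt (Real.sqrt_pos.mpr (hSpos x))
  · exact fun x => inv_pos.mpr (Real.sqrt_pos.mpr (hSpos x))
  · intro A t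
    obtain ⟨hsm, c, hcpos, hc⟩ := hconf A t
    refine ⟨hsm, ?_⟩
    intro x u w
    have hScocycle : S (φ A t x) = (c x) ^ 2 * S x := by
      rw [hS]
      simp only
      rw [Finset.mul_sum]
      apply Finset.sum_congr rfl
      intro i _
      rw [Finset.mul_sum]
      apply Finset.sum_congr rfl
      intro j _
      rw [← hcomm A (b i) t x, ← hcomm A (b j) t x, hc x (v (b i) x) (v (b j) x),
        mul_pow]
    have hkey : (Real.sqrt (S (φ A t x)))⁻¹ * c x = (Real.sqrt (S x))⁻¹ := by
      rw [hScocycle, Real.sqrt_mul (sq_nonneg _), Real.sqrt_sq (le_of_lt (hcpos x)),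
        mul_inv, mul_comm ((c x)⁻¹) ((Real.sqrt (S x))⁻¹),
        inv_mul_cancel_right₀ (ne_of_gt (hcpos x))]
    simp only [ContinuousLinearMap.smul_apply, smul_eq_mul]
    show (Real.sqrt (S (φ A t x)))⁻¹ * g (φ A t x) (mfderiv 𝓘(ℝ, E) 𝓘(ℝ, E) (φ A t) x u)
      (mfderiv 𝓘(ℝ, E) 𝓘(ℝ, E) (φ A t) x w) = (Real.sqrt (S x))⁻¹ * g x u w
    rw [hc x u w, ← mul_assoc, hkey]
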